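/- Let A be an expanding linear isomorphism of ℝⁿ and Q ⊂ ℝⁿ finite, and let a_−⁻¹ be the spectral radius of A⁻¹. Then the Hausdorff dimension of the attractor Λ(A,Q) is at most ln(card Q)/ln(a_−). -/

import Mathlib

open Metric Set MeasureTheory
open scoped Pointwise

noncomputable section

/-- All complex eigenvalues of the real matrix `M` have modulus greater than `1`. -/
def IsExpandingMatrix {n : ℕ} (M : Matrix (Fin n) (Fin n) ℝ) : Prop :=
  ∀ z ∈ (M.charpoly.map (algebraMap ℝ ℂ)).roots, 1 < ‖z‖

/-- The real vector associated to an integer vector. -/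
def vecReal {n : ℕ} (v : Fin n → ℤ) : Fin n → ℝ := fun i => (v i : ℝ)

/-- `(M,R)` is a standard pair. -/
def IsStandardPair {n : ℕ} (M : Matrix (Fin n) (Fin n) ℤ) (R : Finset (Fin n → ℤ)) : Prop :=
  IsExpandingMatrix (M.map (Int.cast : ℤ → ℝ)) ∧ (0 : Fin n → ℤ) ∈ R ∧
    ∀ v : Fin n → ℤ, ∃! r, r ∈ R ∧ ∃ z : Fin n → ℤ, v = M.mulVec z + r

/-- The iterated function system map `τ(A) = ⋃_{r ∈ R} M⁻¹ (A + r)`. -/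
def tauIFS {n : ℕ} (M : Matrix (Fin n) (Fin n) ℝ) (R : Set (Fin n → ℝ))
    (A : Set (Fin n → ℝ)) : Set (Fin n → ℝ) :=
  ⋃ r ∈ R, (fun a => M⁻¹.mulVec (a + r)) '' A

section Stmt13Aux

open Matrix Polynomial Filter
open scoped Topology NNReal ENNReal

attribute [local instance] Matrix.linftyOpNormedRing Matrix.linftyOpNormedAlgebra

lemma stmt13_mem_spectrum_iff_root {K : Type*} [Field K] {n : ℕ}
    (M : Matrix (Fin n) (Fin n) K) (z : K) :
    z ∈ spectrum K M ↔ M.charpoly.eval z = 0 := by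
  rw [spectrum.mem_iff]
  have h0 : algebraMap K (Matrix (Fin n) (Fin n) K) z = Matrix.scalar (Fin n) z := by
    ext i j
    simp [Matrix.algebraMap_eq_diagonal, Matrix.scalar_apply, Pi.algebraMap_apply,
      Matrix.diagonal]
  have h1 : M.charpoly.eval z = (algebraMap K (Matrix (Fin n) (Fin n) K) z - M).det := by
    rw [Matrix.charpoly, eval_det, Matrix.matPolyEquiv_charmatrix, h0]
    simp
  rw [h1, not_iff_comm, Iff.comm]
  rw [Matrix.isUnit_iff_isUnit_det, isUnit_iff_ne_zero]

lemma stmt13_nnnorm_map_complex {n : ℕ} (M : Matrix (Fin n) (Fin n) ℝ) :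
    ‖M.map (algebraMap ℝ ℂ)‖₊ = ‖M‖₊ := by
  simp [Matrix.linfty_opNNNorm_def, Matrix.map_apply, Complex.coe_algebraMap]

lemma stmt13_norm_decay {n : ℕ} (A : Matrix (Fin n) (Fin n) ℝ) (hdet : IsUnit A.det)
    {a b : ℝ} (hb1 : 1 < b) (hba : b < a)
    (hmin : ∀ z ∈ (A.charpoly.map (algebraMap ℝ ℂ)).roots, a ≤ ‖z‖) :
    ∃ C : ℝ≥0, 0 < C ∧ ∀ k : ℕ, ‖A⁻¹ ^ k‖₊ ≤ C * (b.toNNReal)⁻¹ ^ k := by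
  have ha1 : (1:ℝ) < a := hb1.trans hba
  have hb0 : (0:ℝ) < b := lt_trans one_pos hb1
  set f := algebraMap ℝ ℂ
  set Ac := A.map f with hAc
  have hdetc : IsUnit Ac.det := by
    have : Ac.det = f A.det := by
      rw [hAc, ← RingHom.mapMatrix_apply, ← RingHom.map_det]
    rw [this]; exact hdet.map f
  have hAcinv : Ac⁻¹ = A⁻¹.map f := by
    apply Matrix.inv_eq_right_inv
    rw [← Matrix.map_mul, Matrix.mul_nonsing_inv _ hdet]
    exact Matrix.map_one _ (map_zero f) (map_one f)
  have hu : IsUnit Ac := (Matrix.isUnit_iff_isUnit_det _).mpr hdetc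
  obtain ⟨u, hu'⟩ := hu
  have hspec : ∀ μ ∈ spectrum ℂ Ac⁻¹, (‖μ‖₊ : ℝ≥0∞) ≤ ENNReal.ofReal a⁻¹ := by
    intro μ hμ
    have h1 : Ac⁻¹ = ((u⁻¹ : (Matrix (Fin n) (Fin n) ℂ)ˣ) : Matrix (Fin n) (Fin n) ℂ) := by
      rw [Matrix.coe_units_inv, hu']
    rw [h1, ← spectrum.map_inv, Set.mem_inv, hu'] at hμ
    have hroot : μ⁻¹ ∈ (A.charpoly.map f).roots := by
      rw [Polynomial.mem_roots ((A.charpoly_monic.map f).ne_zero), Polynomial.IsRoot,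
        ← Matrix.charpoly_map]
      exact (stmt13_mem_spectrum_iff_root _ _).mp hμ
    have hν' : a ≤ ‖μ⁻¹‖ := hmin _ hroot
    have hμ0 : μ ≠ 0 := by
      intro h; rw [h] at hν'; simp at hν'; linarith
    have hle : ‖μ‖ ≤ a⁻¹ := by
      have h2 : ‖μ‖ = ‖μ⁻¹‖⁻¹ := by rw [norm_inv, inv_inv]
      rw [h2]
      exact inv_anti₀ (by linarith) hν'
    rw [← ENNReal.ofReal_coe_nnreal]
    apply ENNReal.ofReal_le_ofReal
    simpa using hle
  have hrad : spectralRadius ℂ Ac⁻¹ ≤ ENNReal.ofReal a⁻¹ := by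
    rw [spectralRadius]
    exact iSup₂_le hspec
  haveI : CompleteSpace (Matrix (Fin n) (Fin n) ℂ) := FiniteDimensional.complete ℂ _
  have hgel := spectrum.pow_nnnorm_pow_one_div_tendsto_nhds_spectralRadius (Ac⁻¹)
  set β : ℝ≥0 := (b.toNNReal)⁻¹ with hβ
  have ht0 : b.toNNReal ≠ 0 := (Real.toNNReal_pos.mpr hb0).ne'
  have hβ0 : 0 < β := by
    rw [hβ]
    exact inv_pos.mpr (Real.toNNReal_pos.mpr hb0)
  have hofreal : ENNReal.ofReal b⁻¹ = (β : ℝ≥0∞) := by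
    rw [hβ, ENNReal.ofReal, Real.toNNReal_inv]
  have hlt : spectralRadius ℂ Ac⁻¹ < ENNReal.ofReal b⁻¹ := by
    refine hrad.trans_lt ((ENNReal.ofReal_lt_ofReal_iff (by positivity)).mpr ?_)
    exact inv_strictAnti₀ hb0 hba
  have hev : ∀ᶠ k : ℕ in atTop, (‖Ac⁻¹ ^ k‖₊ : ℝ≥0∞) ^ (1/(k:ℝ)) < ENNReal.ofReal b⁻¹ :=
    hgel.eventually_lt_const hlt
  have hnorm_eq : ∀ k : ℕ, ‖Ac⁻¹ ^ k‖₊ = ‖A⁻¹ ^ k‖₊ := by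
    intro k
    rw [hAcinv, ← RingHom.mapMatrix_apply, ← map_pow, RingHom.mapMatrix_apply]
    exact stmt13_nnnorm_map_complex _
  obtain ⟨K, hK⟩ := eventually_atTop.mp hev
  have hKbd : ∀ k : ℕ, K ≤ k → 1 ≤ k → ‖A⁻¹ ^ k‖₊ ≤ β ^ k := by
    intro k hk hk1
    have h1 := hK k hk
    rw [hofreal] at h1
    have hk0 : (k:ℝ) ≠ 0 := by positivity
    have h2 : ((‖Ac⁻¹ ^ k‖₊ : ℝ≥0∞) ^ (1/(k:ℝ))) ^ (k:ℝ) ≤ ((β:ℝ≥0∞)) ^ (k:ℝ) :=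
      ENNReal.rpow_le_rpow h1.le (by positivity)
    rw [← ENNReal.rpow_mul, one_div,
      inv_mul_cancel₀ hk0, ENNReal.rpow_one, ENNReal.rpow_natCast,
      ← ENNReal.coe_pow, ENNReal.coe_le_coe, hnorm_eq] at h2
    exact h2
  have htβ : b.toNNReal * β = 1 := mul_inv_cancel₀ ht0
  set C : ℝ≥0 := 1 + (Finset.range (K+1)).sup (fun k => ‖A⁻¹ ^ k‖₊ * (b.toNNReal) ^ k) with hC
  refine ⟨C, zero_lt_one.trans_le (le_add_of_nonneg_right zero_le), fun k => ?_⟩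
  rcases lt_or_ge K k with hk | hk
  · calc ‖A⁻¹ ^ k‖₊ ≤ β ^ k := hKbd k (by omega) (by omega)
      _ ≤ C * β ^ k := le_mul_of_one_le_left zero_le (le_add_of_nonneg_right zero_le)
  · have hmem : k ∈ Finset.range (K+1) := Finset.mem_range.mpr (by omega)
    have h1 : ‖A⁻¹ ^ k‖₊ * (b.toNNReal) ^ k ≤ C := by
      rw [hC]
      exact le_add_of_nonneg_of_le zero_le
        (Finset.le_sup (f := fun k => ‖A⁻¹ ^ k‖₊ * (b.toNNReal) ^ k) hmem)
    calc ‖A⁻¹ ^ k‖₊ = (‖A⁻¹ ^ k‖₊ * (b.toNNReal) ^ k) * β ^ k := by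
          rw [mul_assoc, ← mul_pow, htβ, one_pow, mul_one]
      _ ≤ C * β ^ k := mul_le_mul_left h1 _

lemma stmt13_cover_lemma {n : ℕ} (A : Matrix (Fin n) (Fin n) ℝ) (Q : Finset (Fin n → ℝ))
    (Λ : Set (Fin n → ℝ)) (hfix : tauIFS A (↑Q) Λ = Λ) (k : ℕ) :
    ∃ T : Finset (Fin n → ℝ), T.card ≤ Q.card ^ k ∧
      Λ ⊆ ⋃ c ∈ T, (fun x => (A⁻¹ ^ k) *ᵥ x + c) '' Λ := by
  classical
  induction k with
  | zero =>
    refine ⟨{0}, by simp, fun x hx => ?_⟩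
    simp only [Finset.mem_singleton, Set.mem_iUnion]
    exact ⟨0, rfl, ⟨x, hx, by simp [Matrix.one_mulVec]⟩⟩
  | succ k ih =>
    obtain ⟨T, hTcard, hTsub⟩ := ih
    refine ⟨(T ×ˢ Q).image (fun p => A⁻¹ *ᵥ (p.1 + p.2)), ?_, ?_⟩
    · calc ((T ×ˢ Q).image (fun p => A⁻¹ *ᵥ (p.1 + p.2))).card ≤ (T ×ˢ Q).card :=
          Finset.card_image_le
        _ = T.card * Q.card := Finset.card_product _ _
        _ ≤ Q.card ^ k * Q.card := Nat.mul_le_mul_right _ hTcard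
        _ = Q.card ^ (k+1) := (pow_succ _ _).symm
    · intro x hx
      rw [← hfix] at hx
      simp only [tauIFS, Set.mem_iUnion, Set.mem_image] at hx
      obtain ⟨q, hq, y, hy, rfl⟩ := hx
      obtain ⟨c, hc, z, hz, rfl⟩ := by
        have := hTsub hy
        simpa only [Set.mem_iUnion, Set.mem_image] using this
      simp only [Set.mem_iUnion, Set.mem_image]
      refine ⟨A⁻¹ *ᵥ (c + q), Finset.mem_image.mpr ⟨(c, q), Finset.mem_product.mpr ⟨hc, hq⟩, rfl⟩,
        z, hz, ?_⟩
      simp [Matrix.mulVec_add, Matrix.mulVec_mulVec, ← pow_succ', add_assoc]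
      rw [← Matrix.inv_pow', ← Matrix.inv_pow', ← pow_succ']

lemma stmt13_ediam_affine_image {n : ℕ} (M : Matrix (Fin n) (Fin n) ℝ) (c : Fin n → ℝ)
    (s : Set (Fin n → ℝ)) :
    EMetric.diam ((fun x => M *ᵥ x + c) '' s) ≤ ‖M‖₊ * EMetric.diam s := by
  have hl : LipschitzWith ‖M‖₊ (fun x => M *ᵥ x + c) := by
    apply LipschitzWith.of_dist_le_mul
    intro x y
    simp only [dist_eq_norm]
    have h1 : (M *ᵥ x + c) - (M *ᵥ y + c) = M *ᵥ (x - y) := by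
      rw [Matrix.mulVec_sub]; abel
    rw [h1]
    exact Matrix.linfty_opNorm_mulVec M (x - y)
  exact hl.ediam_image_le s

end Stmt13Aux

section Stmt13Main

open Matrix Polynomial Filter
open scoped Topology NNReal ENNReal

attribute [local instance] Matrix.linftyOpNormedRing Matrix.linftyOpNormedAlgebra

/-- the Hausdorff dimension of the attractor `Λ(A,Q)` is at most
`ln(card Q)/ln(a₋)`, where `a₋ > 1` is the smallest modulus of an eigenvalue of
`A` (so `a₋⁻¹` is the spectral radius of `A⁻¹`). -/
theorem stmt13 (n : ℕ) (A : Matrix (Fin n) (Fin n) ℝ) (hdet : IsUnit A.det)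
    (hexp : IsExpandingMatrix A) (Q : Finset (Fin n → ℝ)) (hQ : Q.Nonempty)
    (a : ℝ) (ha : 1 < a)
    (hmin : ∀ z ∈ (A.charpoly.map (algebraMap ℝ ℂ)).roots, a ≤ ‖z‖)
    (hattained : ∃ z ∈ (A.charpoly.map (algebraMap ℝ ℂ)).roots, ‖z‖ = a)
    (Λ : Set (Fin n → ℝ)) (hne : Λ.Nonempty) (hc : IsCompact Λ)
    (hfix : tauIFS A (↑Q) Λ = Λ) :
    dimH Λ ≤ ENNReal.ofReal (Real.log Q.card / Real.log a) := by
  classical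
  have hN1 : 1 ≤ Q.card := Finset.card_pos.mpr hQ
  have hNR : (1:ℝ) ≤ (Q.card : ℝ) := by exact_mod_cast hN1
  have hD : EMetric.diam Λ ≠ ⊤ := hc.isBounded.ediam_ne_top
  have hloga : 0 < Real.log a := Real.log_pos ha
  have ht0 : 0 ≤ Real.log Q.card / Real.log a := div_nonneg (Real.log_nonneg hNR) hloga.le
  have key : ∀ b : ℝ, 1 < b → b < a → ∀ d : ℝ, Real.log Q.card / Real.log b < d →
      dimH Λ ≤ ENNReal.ofReal d := by
    intro b hb1 hba d hd
    have hb0 : (0:ℝ) < b := one_pos.trans hb1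
    have hlogb : 0 < Real.log b := Real.log_pos hb1
    have hd0 : 0 < d := lt_of_le_of_lt (div_nonneg (Real.log_nonneg hNR) hlogb.le) hd
    obtain ⟨C, hC0, hCk⟩ := stmt13_norm_decay A hdet hb1 hba hmin
    choose T hTcard hTsub using stmt13_cover_lemma A Q Λ hfix
    set β : ℝ≥0 := (b.toNNReal)⁻¹ with hβ
    have hβR : (β : ℝ) = b⁻¹ := by
      rw [hβ, NNReal.coe_inv, Real.coe_toNNReal _ hb0.le]
    have hβ1 : (β:ℝ≥0∞) < 1 := by
      rw [ENNReal.coe_lt_one_iff, ← NNReal.coe_lt_coe, hβR, NNReal.coe_one]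
      rw [inv_lt_one_iff₀]
      right; exact hb1
    set t : ∀ k : ℕ, {c // c ∈ T k} → Set (Fin n → ℝ) :=
      fun k c => (fun x => (A⁻¹ ^ k) *ᵥ x + (c : Fin n → ℝ)) '' Λ with htdef
    set r : ℕ → ℝ≥0∞ := fun k => ((C * β ^ k : ℝ≥0) : ℝ≥0∞) * EMetric.diam Λ with hr
    have hrt : Tendsto r atTop (𝓝 0) := by
      have h1 : r = fun k => (β:ℝ≥0∞)^k * ((C:ℝ≥0∞) * EMetric.diam Λ) := by
        funext k
        rw [hr]
        push_cast
        ring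
      rw [h1]
      have h2 : Tendsto (fun k : ℕ => (β:ℝ≥0∞)^k * ((C:ℝ≥0∞) * EMetric.diam Λ)) atTop
          (𝓝 (0 * ((C:ℝ≥0∞) * EMetric.diam Λ))) :=
        ENNReal.Tendsto.mul_const (ENNReal.tendsto_pow_atTop_nhds_zero_of_lt_one hβ1)
          (Or.inr (ENNReal.mul_ne_top ENNReal.coe_ne_top hD))
      simpa using h2
    have hdiam : ∀ k (i : {c // c ∈ T k}), EMetric.diam (t k i) ≤ r k := by
      intro k i
      refine (stmt13_ediam_affine_image _ _ _).trans ?_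
      rw [hr]
      exact mul_le_mul_left (ENNReal.coe_le_coe.mpr (hCk k)) _
    have hcover : ∀ k, Λ ⊆ ⋃ i : {c // c ∈ T k}, t k i := by
      intro k x hx
      obtain ⟨c, hc, hmem⟩ := by
        have := hTsub k hx
        simpa only [Set.mem_iUnion] using this
      exact Set.mem_iUnion.mpr ⟨⟨c, hc⟩, hmem⟩
    have hμ := MeasureTheory.Measure.hausdorffMeasure_le_liminf_sum d Λ r hrt t
      (Filter.Eventually.of_forall hdiam) (Filter.Eventually.of_forall hcover)
    -- bound the sums
    set D0 : ℝ≥0∞ := ((C:ℝ≥0∞) * EMetric.diam Λ) ^ d with hD0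
    have hD0top : D0 ≠ ⊤ :=
      ENNReal.rpow_ne_top_of_nonneg hd0.le (ENNReal.mul_ne_top ENNReal.coe_ne_top hD)
    set qq : ℝ≥0∞ := (Q.card : ℝ≥0∞) * ((β:ℝ≥0∞) ^ d) with hqq
    have hrd : ∀ k, (r k) ^ d ≤ ((C:ℝ≥0∞) * EMetric.diam Λ) ^ d * ((β:ℝ≥0∞)^d) ^ k := by
      intro k
      have h1 : r k = ((C:ℝ≥0∞) * EMetric.diam Λ) * (β:ℝ≥0∞) ^ k := by
        rw [hr]; push_cast; ring
      rw [h1, ENNReal.mul_rpow_of_nonneg _ _ hd0.le, ← ENNReal.rpow_natCast (β:ℝ≥0∞) k,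
        ← ENNReal.rpow_mul, mul_comm (k:ℝ) d, ENNReal.rpow_mul, ENNReal.rpow_natCast]
    have hsum : ∀ k, (∑ i : {c // c ∈ T k}, EMetric.diam (t k i) ^ d) ≤ D0 * qq ^ k := by
      intro k
      calc (∑ i : {c // c ∈ T k}, EMetric.diam (t k i) ^ d)
          ≤ ∑ _i : {c // c ∈ T k}, (r k) ^ d :=
            Finset.sum_le_sum fun i _ => ENNReal.rpow_le_rpow (hdiam k i) hd0.le
        _ = ((T k).card : ℝ≥0∞) * (r k) ^ d := by
            rw [Finset.sum_const, Finset.card_univ, Fintype.card_coe, nsmul_eq_mul]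
        _ ≤ (Q.card ^ k : ℝ≥0∞) * (((C:ℝ≥0∞) * EMetric.diam Λ) ^ d * ((β:ℝ≥0∞)^d) ^ k) := by
            apply mul_le_mul'
            · exact_mod_cast Nat.cast_le.mpr (hTcard k)
            · exact hrd k
        _ = D0 * qq ^ k := by
            rw [hD0, hqq, mul_pow]
            push_cast
            ring
    have hqq1 : qq < 1 := by
      have hβd : ((β:ℝ≥0∞) ^ d) = ((β ^ d : ℝ≥0) : ℝ≥0∞) :=
        (ENNReal.coe_rpow_of_nonneg β hd0.le).symm
      rw [hqq, hβd]
      have hcast : (Q.card : ℝ≥0∞) = ((Q.card : ℝ≥0) : ℝ≥0∞) := by push_cast; rfl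
      rw [hcast, ← ENNReal.coe_mul, ENNReal.coe_lt_one_iff, ← NNReal.coe_lt_coe]
      push_cast
      rw [hβR]
      have hbd : (Q.card : ℝ) < b ^ d := by
        have h1 : Real.log Q.card < d * Real.log b := by
          rw [div_lt_iff₀ hlogb] at hd
          linarith
        calc (Q.card : ℝ) = Real.exp (Real.log Q.card) :=
              (Real.exp_log (by linarith)).symm
          _ < Real.exp (Real.log b * d) := by
              apply Real.exp_lt_exp.mpr; linarith
          _ = b ^ d := (Real.rpow_def_of_pos hb0 d).symm
      rw [Real.inv_rpow hb0.le]
      rw [← div_eq_mul_inv, div_lt_one (by positivity)]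
      exact hbd
    have hE : Tendsto (fun k => D0 * qq ^ k) atTop (𝓝 0) := by
      have h2 := ENNReal.Tendsto.const_mul
        (ENNReal.tendsto_pow_atTop_nhds_zero_of_lt_one hqq1) (Or.inr hD0top)
      simpa using h2
    have hμ0 : μH[d] Λ = 0 := by
      refine le_antisymm ?_ zero_le
      refine hμ.trans ?_
      calc Filter.liminf (fun k => ∑ i : {c // c ∈ T k}, EMetric.diam (t k i) ^ d) atTop
          ≤ Filter.liminf (fun k => D0 * qq ^ k) atTop :=
            Filter.liminf_le_liminf (Filter.Eventually.of_forall hsum)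
        _ = 0 := hE.liminf_eq
    have hd' : ((d.toNNReal : ℝ≥0) : ℝ) = d := Real.coe_toNNReal d hd0.le
    have : μH[((d.toNNReal : ℝ≥0) : ℝ)] Λ ≠ ⊤ := by
      rw [hd', hμ0]
      exact ENNReal.zero_ne_top
    have hdim := dimH_le_of_hausdorffMeasure_ne_top this
    rwa [ENNReal.ofReal]
  -- assemble
  refine ENNReal.le_of_forall_pos_le_add fun ε hε _ => ?_
  have hεR : (0:ℝ) < (ε:ℝ) := hε
  have ha0 : (0:ℝ) < a := lt_trans one_pos ha
  have hcont : Tendsto (fun x : ℝ => Real.log Q.card / Real.log x) (𝓝[Set.Ioo 1 a] a)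
      (𝓝 (Real.log Q.card / Real.log a)) := by
    apply Filter.Tendsto.div tendsto_const_nhds
    · exact ((Real.continuousAt_log ha0.ne').continuousWithinAt)
    · exact hloga.ne'
  have hev : ∀ᶠ x in 𝓝[Set.Ioo 1 a] a,
      Real.log Q.card / Real.log x < Real.log Q.card / Real.log a + ε :=
    hcont.eventually_lt_const (lt_add_of_pos_right _ hεR)
  haveI : (𝓝[Set.Ioo 1 a] a).NeBot := right_nhdsWithin_Ioo_neBot ha
  obtain ⟨b, hblt, hbmem⟩ := (hev.and eventually_mem_nhdsWithin).exists
  have hkey := key b hbmem.1 hbmem.2 (Real.log Q.card / Real.log a + ε) hblt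
  calc dimH Λ ≤ ENNReal.ofReal (Real.log Q.card / Real.log a + ε) := hkey
    _ = ENNReal.ofReal (Real.log Q.card / Real.log a) + ENNReal.ofReal ε :=
        ENNReal.ofReal_add ht0 hεR.le
    _ = ENNReal.ofReal (Real.log Q.card / Real.log a) + ε := by
        rw [ENNReal.ofReal_coe_nnreal]

end Stmt13Main
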